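/- For the switch channel, let 𝒱 be any finite set and let (S,V,X₁,X₂,Y) be random variables whose joint pmf has the product form (1/2)·P_{X₂}(x₂)·P_{X₁|X₂}(x₁|x₂)·P_{V|S,X₁,X₂}(v|s,x₁,x₂) with Y = X_S. If I(V,X₁,X₂ ; Y) - I(V,X₁,X₂ ; S) ≥ 1, then I(X₁ ; Y | V,X₂) = 0. Consequently there is no such joint distribution simultaneously satisfying 0 ≤ I(V,X₂;Y) - I(V,X₂;S), 1/2 ≤ I(X₁;Y|V,X₂) and 1 ≤ I(V,X₁,X₂;Y) - I(V,X₁,X₂;S); that is, the rate pair (R_c,R₁) = (1/2,1/2) does not belong to the outer bound R^out for the switch channel. -/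

import Mathlib

open scoped BigOperators
open Classical

noncomputable section

/-- Probability that the random variable `X` equals `x` under the pmf `p`. -/
def pr {Ω α : Type*} [Fintype Ω] (p : Ω → ℝ) (X : Ω → α) (x : α) : ℝ :=
  ∑ ω : Ω, if X ω = x then p ω else 0

/-- Shannon entropy (in bits), with the convention `0 · log₂ 0 = 0`. -/
def ent {Ω α : Type*} [Fintype Ω] (p : Ω → ℝ) (X : Ω → α) : ℝ :=
  -∑ x ∈ Finset.univ.image X, pr p X x * Real.logb 2 (pr p X x)

/-- Conditional entropy `H(X|Y) = H(X,Y) - H(Y)`. -/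
def condEnt {Ω α β : Type*} [Fintype Ω] (p : Ω → ℝ) (X : Ω → α) (Y : Ω → β) : ℝ :=
  ent p (fun ω => (X ω, Y ω)) - ent p Y

/-- Mutual information `I(X;Y) = H(X) + H(Y) - H(X,Y)`. -/
def mi {Ω α β : Type*} [Fintype Ω] (p : Ω → ℝ) (X : Ω → α) (Y : Ω → β) : ℝ :=
  ent p X + ent p Y - ent p (fun ω => (X ω, Y ω))

/-- Conditional mutual information `I(X;Y|Z) = H(X,Z) + H(Y,Z) - H(X,Y,Z) - H(Z)`. -/
def cmi {Ω α β γ : Type*} [Fintype Ω] (p : Ω → ℝ) (X : Ω → α) (Y : Ω → β) (Z : Ω → γ) : ℝ :=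
  ent p (fun ω => (X ω, Z ω)) + ent p (fun ω => (Y ω, Z ω))
    - ent p (fun ω => (X ω, Y ω, Z ω)) - ent p Z

/-- `p` is a probability mass function on the finite sample space `Ω`. -/
def IsPMF {Ω : Type*} [Fintype Ω] (p : Ω → ℝ) : Prop :=
  (∀ ω, 0 ≤ p ω) ∧ ∑ ω : Ω, p ω = 1

/-- The random variables `X` and `Y` are independent under `p`. -/
def IndepRV {Ω α β : Type*} [Fintype Ω] (p : Ω → ℝ) (X : Ω → α) (Y : Ω → β) : Prop :=
  ∀ x y, pr p (fun ω => (X ω, Y ω)) (x, y) = pr p X x * pr p Y y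

end

noncomputable section Aux

variable {Ω α β : Type*} [Fintype Ω]

lemma pr_nonneg (p : Ω → ℝ) (hp : ∀ ω, 0 ≤ p ω) (X : Ω → α) (x : α) : 0 ≤ pr p X x := by
  unfold pr; apply Finset.sum_nonneg; intro ω _
  by_cases h : X ω = x <;> simp [h, hp ω]

lemma pr_eq_zero_of_not_mem {p : Ω → ℝ} {X : Ω → α} {x : α}
    (hx : x ∉ Finset.univ.image X) : pr p X x = 0 := by
  unfold pr; apply Finset.sum_eq_zero; intro ω _
  rw [if_neg]; exact fun h => hx (Finset.mem_image.mpr ⟨ω, Finset.mem_univ ω, h⟩)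

lemma ent_eq_sum [Fintype α] (p : Ω → ℝ) (X : Ω → α) :
    ent p X = -∑ x : α, pr p X x * Real.logb 2 (pr p X x) := by
  unfold ent; congr 1
  refine Finset.sum_subset (Finset.subset_univ _) ?_
  intro x _ hx
  rw [pr_eq_zero_of_not_mem hx]; simp

lemma sum_pr [Fintype α] (p : Ω → ℝ) (X : Ω → α) :
    ∑ x : α, pr p X x = ∑ ω : Ω, p ω := by
  unfold pr; rw [Finset.sum_comm]
  refine Finset.sum_congr rfl fun ω _ => ?_
  simp

lemma pr_comp [Fintype β] (p : Ω → ℝ) (T : Ω → β) (f : β → α) (a : α) :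
    pr p (fun ω => f (T ω)) a = pr (pr p T) f a := by
  unfold pr
  have h : ∀ b, (if f b = a then ∑ ω : Ω, (if T ω = b then p ω else 0) else 0)
      = ∑ ω : Ω, (if T ω = b then (if f b = a then p ω else 0) else 0) := by
    intro b; split
    · exact Finset.sum_congr rfl fun ω _ => by split <;> simp [*]
    · exact (Finset.sum_eq_zero fun ω _ => by split <;> simp [*]).symm
  rw [Finset.sum_congr rfl fun b _ => h b, Finset.sum_comm]
  refine Finset.sum_congr rfl fun ω _ => ?_
  simp

lemma ent_comp [Fintype β] [Fintype α] (p : Ω → ℝ) (T : Ω → β) (f : β → α) :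
    ent p (fun ω => f (T ω)) = ent (pr p T) f := by
  rw [ent_eq_sum, ent_eq_sum]
  simp only [pr_comp]

lemma pr_comp_inj (p : Ω → ℝ) (X : Ω → α) {g : α → β} (hg : Function.Injective g) (x : α) :
    pr p (fun ω => g (X ω)) (g x) = pr p X x := by
  unfold pr; exact Finset.sum_congr rfl fun ω _ => by rw [hg.eq_iff]

lemma pr_comp_zero (p : Ω → ℝ) (X : Ω → α) {g : α → β} {b : β} (hb : ∀ x, g x ≠ b) :
    pr p (fun ω => g (X ω)) b = by exact 0 := by
  unfold pr; exact Finset.sum_eq_zero fun ω _ => if_neg (hb _)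

lemma ent_comp_inj [Fintype α] [Fintype β] (p : Ω → ℝ) (X : Ω → α) {g : α → β}
    (hg : Function.Injective g) :
    ent p (fun ω => g (X ω)) = ent p X := by
  rw [ent_eq_sum, ent_eq_sum]
  congr 1
  calc ∑ x : β, pr p (fun ω => g (X ω)) x * Real.logb 2 (pr p (fun ω => g (X ω)) x)
      = ∑ x ∈ Finset.univ.image g,
          pr p (fun ω => g (X ω)) x * Real.logb 2 (pr p (fun ω => g (X ω)) x) := by
        refine (Finset.sum_subset (Finset.subset_univ _) ?_).symm
        intro b _ hb
        have : pr p (fun ω => g (X ω)) b = 0 := by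
          apply pr_comp_zero
          intro x hx
          exact hb (Finset.mem_image.mpr ⟨x, Finset.mem_univ x, hx⟩)
        simp [this]
    _ = ∑ x : α, pr p (fun ω => g (X ω)) (g x) * Real.logb 2 (pr p (fun ω => g (X ω)) (g x)) :=
        Finset.sum_image (fun x _ y _ h => hg h)
    _ = ∑ x : α, pr p X x * Real.logb 2 (pr p X x) := by
        refine Finset.sum_congr rfl fun x _ => ?_
        rw [pr_comp_inj p X hg]

lemma ent_restrict {U W : Type*} [Fintype U] [Fintype W] [Fintype α] (q : W → ℝ) (ι : U → W)
    (hι : Function.Injective ι) (hsupp : ∀ w, (∀ u, ι u ≠ w) → q w = 0) (f : W → α) :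
    ent q f = ent (fun u => q (ι u)) (fun u => f (ι u)) := by
  have hpr : ∀ x, pr q f x = pr (fun u => q (ι u)) (fun u => f (ι u)) x := by
    intro x
    unfold pr
    rw [← Finset.sum_image (s := Finset.univ) (g := ι)
      (f := fun w => if f w = x then q w else 0) (fun a _ b _ h => hι h)]
    refine (Finset.sum_subset (Finset.subset_univ _) ?_).symm
    intro w _ hw
    have : q w = 0 := hsupp w fun u hu => hw (Finset.mem_image.mpr ⟨u, Finset.mem_univ u, hu⟩)
    simp [this]
  rw [ent_eq_sum, ent_eq_sum]
  simp only [hpr]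

lemma sum_ite_and {M : Type*} [Fintype α] [AddCommMonoid M] (a : α) (P : α → Prop)
    (f : α → M) :
    (∑ b : α, if b = a ∧ P b then f b else 0) = if P a then f a else 0 := by
  rw [Finset.sum_eq_single a]
  · simp
  · intro b _ hb; exact if_neg fun h => hb h.1
  · intro h; exact absurd (Finset.mem_univ a) h

lemma phi_nonneg {u v : ℝ} (hu : 0 ≤ u) (hv : 0 ≤ v) :
    u * Real.logb 2 u + v * Real.logb 2 v ≤ (u + v) * Real.logb 2 (u + v) := by
  rcases hu.eq_or_lt with h | hu'
  · simp [← h]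
  rcases hv.eq_or_lt with h | hv'
  · simp [← h]
  have h1 : u * Real.logb 2 u ≤ u * Real.logb 2 (u + v) := by
    apply mul_le_mul_of_nonneg_left _ hu
    exact Real.logb_le_logb_of_le (by norm_num) (by linarith) (by linarith)
  have h2 : v * Real.logb 2 v ≤ v * Real.logb 2 (u + v) := by
    apply mul_le_mul_of_nonneg_left _ hv
    exact Real.logb_le_logb_of_le (by norm_num) (by linarith) (by linarith)
  nlinarith [h1, h2]

lemma phi_le {u v : ℝ} (hu : 0 ≤ u) (hv : 0 ≤ v) :
    (u + v) * Real.logb 2 (u + v) - u * Real.logb 2 u - v * Real.logb 2 v ≤ u + v := by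
  rcases hu.eq_or_lt with h | hu'
  · simp [← h, hv]
  rcases hv.eq_or_lt with h | hv'
  · simp [← h, hu]
  have hl2 : (0:ℝ) < Real.log 2 := Real.log_pos (by norm_num)
  have k1 : Real.log ((u+v)/(2*u)) ≤ (u+v)/(2*u) - 1 :=
    Real.log_le_sub_one_of_pos (by positivity)
  have k2 : Real.log ((u+v)/(2*v)) ≤ (u+v)/(2*v) - 1 :=
    Real.log_le_sub_one_of_pos (by positivity)
  have e1 : Real.log ((u+v)/(2*u)) = Real.log (u+v) - Real.log 2 - Real.log u := by
    rw [Real.log_div (by positivity) (by positivity), Real.log_mul (by norm_num) hu'.ne']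
    ring
  have e2 : Real.log ((u+v)/(2*v)) = Real.log (u+v) - Real.log 2 - Real.log v := by
    rw [Real.log_div (by positivity) (by positivity), Real.log_mul (by norm_num) hv'.ne']
    ring
  have c1 : u * ((u+v)/(2*u) - 1) = (u+v)/2 - u := by field_simp
  have c2 : v * ((u+v)/(2*v) - 1) = (u+v)/2 - v := by field_simp
  have key : (u+v) * Real.log (u+v) - u * Real.log u - v * Real.log v ≤ (u+v) * Real.log 2 := by
    have t1 : u * Real.log ((u+v)/(2*u)) ≤ (u+v)/2 - u := by
      calc u * Real.log ((u+v)/(2*u)) ≤ u * ((u+v)/(2*u) - 1) :=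
            mul_le_mul_of_nonneg_left k1 hu
        _ = (u+v)/2 - u := c1
    have t2 : v * Real.log ((u+v)/(2*v)) ≤ (u+v)/2 - v := by
      calc v * Real.log ((u+v)/(2*v)) ≤ v * ((u+v)/(2*v) - 1) :=
            mul_le_mul_of_nonneg_left k2 hv
        _ = (u+v)/2 - v := c2
    rw [e1] at t1; rw [e2] at t2
    nlinarith [t1, t2]
  have expand : (u + v) * Real.logb 2 (u + v) - u * Real.logb 2 u - v * Real.logb 2 v
      = ((u+v) * Real.log (u+v) - u * Real.log u - v * Real.log v) / Real.log 2 := by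
    simp only [Real.logb]; ring
  rw [expand, div_le_iff₀ hl2]
  calc (u+v) * Real.log (u+v) - u * Real.log u - v * Real.log v ≤ (u+v) * Real.log 2 := key
    _ = (u + v) * Real.log 2 := rfl

end Aux


noncomputable section Core

variable {𝒱 : Type*} [Fintype 𝒱]

lemma pr_snd (q : Fin 2 × 𝒱 × Bool × Bool → ℝ) (a : 𝒱 × Bool × Bool) :
    pr q (fun w => w.2) a = q (0, a) + q (1, a) := by
  unfold pr
  rw [Fintype.sum_prod_type, Fin.sum_univ_two]
  congr 1 <;>
  · rw [Finset.sum_eq_single a]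
    · simp
    · intro b _ hb; exact if_neg hb
    · intro h; exact absurd (Finset.mem_univ a) h

lemma pr_fst (q : Fin 2 × 𝒱 × Bool × Bool → ℝ) (s : Fin 2) :
    pr q (fun w => w.1) s = ∑ a : 𝒱 × Bool × Bool, q (s, a) := by
  unfold pr
  rw [Fintype.sum_prod_type]
  rw [Finset.sum_eq_single s]
  · simp
  · intro b _ hb
    apply Finset.sum_eq_zero
    intro a _
    exact if_neg hb
  · intro h; exact absurd (Finset.mem_univ s) h

lemma pr_id (q : Fin 2 × 𝒱 × Bool × Bool → ℝ) (w : Fin 2 × 𝒱 × Bool × Bool) :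
    pr q (fun w => w) w = q w := by
  unfold pr
  rw [Finset.sum_eq_single w]
  · simp
  · intro b _ hb; exact if_neg hb
  · intro h; exact absurd (Finset.mem_univ w) h

lemma pr_AY (q : Fin 2 × 𝒱 × Bool × Bool → ℝ) (a : 𝒱 × Bool × Bool) (y : Bool) :
    pr q (fun w => (w.2, if w.1 = 0 then w.2.2.1 else w.2.2.2)) (a, y)
      = (if a.2.1 = y then q (0, a) else 0) + (if a.2.2 = y then q (1, a) else 0) := by
  unfold pr
  rw [Fintype.sum_prod_type, Fin.sum_univ_two]
  congr 1 <;>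
  · rw [Finset.sum_eq_single a]
    · simp [Prod.ext_iff]
    · intro b _ hb; exact if_neg fun h => hb (congrArg Prod.fst h)
    · intro h; exact absurd (Finset.mem_univ a) h

lemma core_vanish (q : Fin 2 × 𝒱 × Bool × Bool → ℝ)
    (hq0 : ∀ w, 0 ≤ q w) (hq1 : ∑ w, q w = 1)
    (hS : ∀ s : Fin 2, ∑ a : 𝒱 × Bool × Bool, q (s, a) = 1/2)
    (hmi : 1 ≤ mi q (fun w => w.2) (fun w => if w.1 = 0 then w.2.2.1 else w.2.2.2)
            - mi q (fun w => w.2) (fun w => w.1)) :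
    ∀ w : Fin 2 × 𝒱 × Bool × Bool, w.2.2.1 ≠ w.2.2.2 → q w = 0 := by
  set fY : Fin 2 × 𝒱 × Bool × Bool → Bool := fun w => if w.1 = 0 then w.2.2.1 else w.2.2.2
    with hfY
  -- entropy of S is 1
  have hlb : Real.logb 2 (1/2 : ℝ) = -1 := by
    rw [one_div, Real.logb_inv, Real.logb_self_eq_one (by norm_num)]
  have hentS : ent q (fun w => w.1) = 1 := by
    rw [ent_eq_sum, Fin.sum_univ_two, pr_fst, pr_fst, hS 0, hS 1, hlb]
    norm_num
  -- entropy of Y ≤ 1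
  have hy0 : 0 ≤ pr q fY false := pr_nonneg q hq0 _ _
  have hy1 : 0 ≤ pr q fY true := pr_nonneg q hq0 _ _
  have hysum : pr q fY false + pr q fY true = 1 := by
    have := sum_pr q fY
    rw [hq1] at this
    rw [← this, Fintype.sum_bool]; ring
  have hentY : ent q fY ≤ 1 := by
    rw [ent_eq_sum, Fintype.sum_bool]
    have := phi_le hy0 hy1
    rw [hysum] at this
    simp only [Real.logb_one, mul_zero] at this
    linarith
  -- entropy of (A,S)
  have hentAS : ent q (fun w => (w.2, w.1))
      = -∑ a : 𝒱 × Bool × Bool, (q (0,a) * Real.logb 2 (q (0,a)) + q (1,a) * Real.logb 2 (q (1,a))) := by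
    have h1 : ent q (fun w => (w.2, w.1)) = ent q (fun w => w) :=
      ent_comp_inj q (fun w => w) (g := Prod.swap) Prod.swap_injective
    rw [h1, ent_eq_sum]
    congr 1
    rw [Fintype.sum_prod_type, Fin.sum_univ_two]
    rw [← Finset.sum_add_distrib]
    refine Finset.sum_congr rfl fun a _ => ?_
    rw [pr_id, pr_id]
  -- entropy of (A,Y)
  have hentAY : ent q (fun w => (w.2, fY w))
      = -∑ a : 𝒱 × Bool × Bool, (if a.2.1 = a.2.2
          then (q (0,a) + q (1,a)) * Real.logb 2 (q (0,a) + q (1,a))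
          else q (0,a) * Real.logb 2 (q (0,a)) + q (1,a) * Real.logb 2 (q (1,a))) := by
    rw [ent_eq_sum]
    congr 1
    rw [Fintype.sum_prod_type]
    refine Finset.sum_congr rfl fun a _ => ?_
    rw [Fintype.sum_bool, pr_AY, pr_AY]
    obtain ⟨v, x1, x2⟩ := a
    cases x1 <;> cases x2 <;> simp <;> ring
  -- combination
  have hcomb : mi q (fun w => w.2) fY - mi q (fun w => w.2) (fun w => w.1)
      = ent q fY - ent q (fun w => w.1) - ent q (fun w => (w.2, fY w))
        + ent q (fun w => (w.2, w.1)) := by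
    simp only [mi]; ring
  set D : 𝒱 × Bool × Bool → ℝ := fun a =>
    if a.2.1 = a.2.2
    then (q (0,a) + q (1,a)) * Real.logb 2 (q (0,a) + q (1,a))
          - q (0,a) * Real.logb 2 (q (0,a)) - q (1,a) * Real.logb 2 (q (1,a))
    else 0 with hD
  have hdiff : ent q (fun w => (w.2, w.1)) - ent q (fun w => (w.2, fY w))
      = ∑ a : 𝒱 × Bool × Bool, D a := by
    rw [hentAS, hentAY]
    have : ∀ X Y : ℝ, -X - -Y = Y - X := by intro X Y; ring
    rw [this, ← Finset.sum_sub_distrib]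
    refine Finset.sum_congr rfl fun a _ => ?_
    by_cases h : a.2.1 = a.2.2 <;> simp [hD, h] <;> ring
  have hsum1 : ∑ a : 𝒱 × Bool × Bool, (q (0,a) + q (1,a)) = 1 := by
    have e : ∑ w : Fin 2 × 𝒱 × Bool × Bool, q w
        = ∑ a : 𝒱 × Bool × Bool, (q (0,a) + q (1,a)) := by
      rw [Fintype.sum_prod_type, Fin.sum_univ_two, ← Finset.sum_add_distrib]
    exact e.symm.trans hq1
  have hDle : ∀ a : 𝒱 × Bool × Bool,
      D a ≤ (if a.2.1 = a.2.2 then (q (0,a) + q (1,a)) else 0) := by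
    intro a
    by_cases h : a.2.1 = a.2.2 <;> simp [hD, h]
    have := phi_le (hq0 (0,a)) (hq0 (1,a))
    linarith
  have hDsum : (1:ℝ) ≤ ∑ a : 𝒱 × Bool × Bool, D a := by
    rw [hcomb, hentS] at hmi
    linarith [hdiff, hentY]
  have hoff : ∑ a : 𝒱 × Bool × Bool,
      (if a.2.1 = a.2.2 then (0:ℝ) else q (0,a) + q (1,a)) = 0 := by
    have hsplit : ∑ a : 𝒱 × Bool × Bool, (q (0,a) + q (1,a))
        = ∑ a : 𝒱 × Bool × Bool, (if a.2.1 = a.2.2 then (q (0,a) + q (1,a)) else 0)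
          + ∑ a : 𝒱 × Bool × Bool, (if a.2.1 = a.2.2 then (0:ℝ) else q (0,a) + q (1,a)) := by
      rw [← Finset.sum_add_distrib]
      refine Finset.sum_congr rfl fun a _ => ?_
      by_cases h : a.2.1 = a.2.2 <;> simp [h]
    have hge : ∑ a : 𝒱 × Bool × Bool, D a
        ≤ ∑ a : 𝒱 × Bool × Bool, (if a.2.1 = a.2.2 then (q (0,a) + q (1,a)) else 0) :=
      Finset.sum_le_sum fun a _ => hDle a
    have hnn : 0 ≤ ∑ a : 𝒱 × Bool × Bool,
        (if a.2.1 = a.2.2 then (0:ℝ) else q (0,a) + q (1,a)) := by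
      apply Finset.sum_nonneg
      intro a _
      by_cases h : a.2.1 = a.2.2 <;> simp [h]
      exact add_nonneg (hq0 _) (hq0 _)
    linarith
  have hzero : ∀ a : 𝒱 × Bool × Bool,
      (if a.2.1 = a.2.2 then (0:ℝ) else q (0,a) + q (1,a)) = 0 := by
    intro a
    refine (Finset.sum_eq_zero_iff_of_nonneg ?_).mp hoff a (Finset.mem_univ a)
    intro b _
    by_cases h : b.2.1 = b.2.2 <;> simp [h]
    exact add_nonneg (hq0 _) (hq0 _)
  intro w hw
  obtain ⟨s, a⟩ := w
  have h := hzero a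
  rw [if_neg hw] at h
  have h0 : q (0, a) = 0 := by linarith [hq0 (0,a), hq0 (1,a)]
  have h1 : q (1, a) = 0 := by linarith [hq0 (0,a), hq0 (1,a)]
  fin_cases s
  · exact h0
  · exact h1

end Core

noncomputable section Core2
variable {𝒱 : Type*} [Fintype 𝒱]

set_option maxHeartbeats 2000000 in
lemma core_cmi (q : Fin 2 × 𝒱 × Bool × Bool → ℝ)
    (hvan : ∀ w : Fin 2 × 𝒱 × Bool × Bool, w.2.2.1 ≠ w.2.2.2 → q w = 0) :
    cmi q (fun w => w.2.2.1) (fun w => if w.1 = 0 then w.2.2.1 else w.2.2.2)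
      (fun w => (w.2.1, w.2.2.2)) = 0 := by
  set ι : Fin 2 × 𝒱 × Bool → Fin 2 × 𝒱 × Bool × Bool := fun u => (u.1, u.2.1, u.2.2, u.2.2)
    with hι
  have hinj : Function.Injective ι := by
    intro u u' h
    obtain ⟨s, v, c⟩ := u; obtain ⟨s', v', c'⟩ := u'
    simp [hι, Prod.ext_iff] at h
    simp [Prod.ext_iff, h.1, h.2.1, h.2.2]
  have hsupp : ∀ w : Fin 2 × 𝒱 × Bool × Bool, (∀ u, ι u ≠ w) → q w = 0 := by
    intro w hw
    apply hvan
    intro hc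
    obtain ⟨s, v, x1, x2⟩ := w
    exact hw (s, v, x1) (by simp_all [hι, Prod.ext_iff])
  unfold cmi
  show ent q (fun w => (w.2.2.1, (w.2.1, w.2.2.2)))
      + ent q (fun w => ((if w.1 = 0 then w.2.2.1 else w.2.2.2 : Bool), (w.2.1, w.2.2.2)))
      - ent q (fun w => (w.2.2.1, ((if w.1 = 0 then w.2.2.1 else w.2.2.2 : Bool), (w.2.1, w.2.2.2))))
      - ent q (fun w => (w.2.1, w.2.2.2)) = 0
  rw [ent_restrict q ι hinj hsupp (fun w => (w.2.2.1, (w.2.1, w.2.2.2))),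
      ent_restrict q ι hinj hsupp
        (fun w => ((if w.1 = 0 then w.2.2.1 else w.2.2.2 : Bool), (w.2.1, w.2.2.2))),
      ent_restrict q ι hinj hsupp
        (fun w => (w.2.2.1, ((if w.1 = 0 then w.2.2.1 else w.2.2.2 : Bool), (w.2.1, w.2.2.2)))),
      ent_restrict q ι hinj hsupp (fun w => (w.2.1, w.2.2.2))]
  show ent (fun u => q (ι u)) (fun u : Fin 2 × 𝒱 × Bool => ((u.2.2 : Bool), (u.2.1, u.2.2)))
      + ent (fun u => q (ι u))
          (fun u : Fin 2 × 𝒱 × Bool => ((if u.1 = 0 then u.2.2 else u.2.2 : Bool), (u.2.1, u.2.2)))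
      - ent (fun u => q (ι u))
          (fun u : Fin 2 × 𝒱 × Bool =>
            ((u.2.2 : Bool), ((if u.1 = 0 then u.2.2 else u.2.2 : Bool), (u.2.1, u.2.2))))
      - ent (fun u => q (ι u)) (fun u : Fin 2 × 𝒱 × Bool => (u.2.1, u.2.2)) = 0
  simp only [ite_self]
  have hg1 : Function.Injective (fun z : 𝒱 × Bool => ((z.2 : Bool), z)) :=
    fun a b h => congrArg Prod.snd h
  have hg3 : Function.Injective (fun z : 𝒱 × Bool => ((z.2 : Bool), ((z.2 : Bool), z))) :=
    fun a b h => congrArg (fun x : Bool × Bool × 𝒱 × Bool => x.2.2) h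
  have e1 : ent (fun u => q (ι u)) (fun u : Fin 2 × 𝒱 × Bool => ((u.2.2 : Bool), (u.2.1, u.2.2)))
      = ent (fun u => q (ι u)) (fun u : Fin 2 × 𝒱 × Bool => (u.2.1, u.2.2)) :=
    ent_comp_inj (fun u => q (ι u)) (fun u : Fin 2 × 𝒱 × Bool => (u.2.1, u.2.2)) hg1
  have e3 : ent (fun u => q (ι u))
        (fun u : Fin 2 × 𝒱 × Bool => ((u.2.2 : Bool), ((u.2.2 : Bool), (u.2.1, u.2.2))))
      = ent (fun u => q (ι u)) (fun u : Fin 2 × 𝒱 × Bool => (u.2.1, u.2.2)) :=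
    ent_comp_inj (fun u => q (ι u)) (fun u : Fin 2 × 𝒱 × Bool => (u.2.1, u.2.2)) hg3
  rw [e1, e3]
  ring

end Core2


/-- **Switch channel, Example 1 (second part).**  Under the product-form joint pmf of the
switch channel with `Y = X_S`: if `I(V,X₁,X₂;Y) - I(V,X₁,X₂;S) ≥ 1` then
`I(X₁;Y|V,X₂) = 0`; consequently no such joint distribution simultaneously satisfies
`0 ≤ I(V,X₂;Y) - I(V,X₂;S)`, `1/2 ≤ I(X₁;Y|V,X₂)` and
`1 ≤ I(V,X₁,X₂;Y) - I(V,X₁,X₂;S)`, i.e. the rate pair `(1/2,1/2)` is not in the outer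
bound `R^out` for the switch channel. -/
theorem switch_channel_half_half_not_in_outer_bound
    {Ω 𝒱 : Type*} [Fintype Ω] [Fintype 𝒱]
    (p : Ω → ℝ) (hp : IsPMF p)
    (S : Ω → Fin 2) (V : Ω → 𝒱) (X₁ X₂ Y : Ω → Bool)
    (hform : ∃ (PX2 : Bool → ℝ) (PX12 : Bool → Bool → ℝ) (PV : Fin 2 → Bool → Bool → 𝒱 → ℝ),
      (∀ x2, 0 ≤ PX2 x2) ∧ (∑ x2, PX2 x2 = 1) ∧
      (∀ x1 x2, 0 ≤ PX12 x1 x2) ∧ (∀ x2, ∑ x1, PX12 x1 x2 = 1) ∧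
      (∀ s x1 x2 v, 0 ≤ PV s x1 x2 v) ∧ (∀ s x1 x2, ∑ v, PV s x1 x2 v = 1) ∧
      (∀ s v x1 x2, pr p (fun ω => (S ω, V ω, X₁ ω, X₂ ω)) (s, v, x1, x2)
          = 1/2 * PX2 x2 * PX12 x1 x2 * PV s x1 x2 v))
    (hY : ∀ ω, Y ω = if S ω = 0 then X₁ ω else X₂ ω) :
    (1 ≤ mi p (fun ω => (V ω, X₁ ω, X₂ ω)) Y - mi p (fun ω => (V ω, X₁ ω, X₂ ω)) S →
      cmi p X₁ Y (fun ω => (V ω, X₂ ω)) = 0) ∧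
    ¬(0 ≤ mi p (fun ω => (V ω, X₂ ω)) Y - mi p (fun ω => (V ω, X₂ ω)) S ∧
      (1:ℝ)/2 ≤ cmi p X₁ Y (fun ω => (V ω, X₂ ω)) ∧
      1 ≤ mi p (fun ω => (V ω, X₁ ω, X₂ ω)) Y - mi p (fun ω => (V ω, X₁ ω, X₂ ω)) S) := by
  obtain ⟨PX2, PX12, PV, h1, h2, h3, h4, h5, h6, h7⟩ := hform
  have hYf : Y = fun ω => if S ω = 0 then X₁ ω else X₂ ω := funext hY
  subst hYf
  set T : Ω → Fin 2 × 𝒱 × Bool × Bool := fun ω => (S ω, V ω, X₁ ω, X₂ ω) with hT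
  set q : Fin 2 × 𝒱 × Bool × Bool → ℝ := pr p T with hq
  have hq0 : ∀ w, 0 ≤ q w := fun w => pr_nonneg p hp.1 T w
  have hq1 : ∑ w, q w = 1 := (sum_pr p T).trans hp.2
  have hswap : ∀ (f : 𝒱 → Bool → Bool → ℝ),
      (∑ v : 𝒱, ∑ x1 : Bool, ∑ x2 : Bool, f v x1 x2)
        = ∑ x2 : Bool, ∑ x1 : Bool, ∑ v : 𝒱, f v x1 x2 := by
    intro f
    rw [Finset.sum_comm]
    have hmid : ∀ x1 : Bool, (∑ v : 𝒱, ∑ x2 : Bool, f v x1 x2)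
        = ∑ x2 : Bool, ∑ v : 𝒱, f v x1 x2 := fun x1 => by rw [Finset.sum_comm]
    rw [Finset.sum_congr rfl fun x1 _ => hmid x1, Finset.sum_comm]
  have hS : ∀ s : Fin 2, ∑ a : 𝒱 × Bool × Bool, q (s, a) = 1/2 := by
    intro s
    have e0 : ∑ a : 𝒱 × Bool × Bool, q (s, a)
        = ∑ v : 𝒱, ∑ x1 : Bool, ∑ x2 : Bool, q (s, v, x1, x2) := by
      rw [Fintype.sum_prod_type]
      exact Finset.sum_congr rfl fun v _ => Fintype.sum_prod_type _
    rw [e0]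
    have e1 : ∀ v x1 x2, q (s, v, x1, x2) = 1/2 * PX2 x2 * PX12 x1 x2 * PV s x1 x2 v :=
      fun v x1 x2 => h7 s v x1 x2
    calc ∑ v : 𝒱, ∑ x1 : Bool, ∑ x2 : Bool, q (s, v, x1, x2)
        = ∑ x2 : Bool, ∑ x1 : Bool, ∑ v : 𝒱, q (s, v, x1, x2) :=
          hswap (fun v x1 x2 => q (s, v, x1, x2))
      _ = ∑ x2 : Bool, ∑ x1 : Bool, ∑ v : 𝒱, 1/2 * PX2 x2 * PX12 x1 x2 * PV s x1 x2 v := by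
          refine Finset.sum_congr rfl fun x2 _ => Finset.sum_congr rfl fun x1 _ =>
            Finset.sum_congr rfl fun v _ => e1 v x1 x2
      _ = ∑ x2 : Bool, ∑ x1 : Bool, 1/2 * PX2 x2 * PX12 x1 x2 := by
          refine Finset.sum_congr rfl fun x2 _ => Finset.sum_congr rfl fun x1 _ => ?_
          rw [← Finset.mul_sum, h6, mul_one]
      _ = ∑ x2 : Bool, 1/2 * PX2 x2 := by
          refine Finset.sum_congr rfl fun x2 _ => ?_
          rw [← Finset.mul_sum, h4, mul_one]
      _ = 1/2 := by rw [← Finset.mul_sum, h2, mul_one]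
  -- transfer of entropies
  have e_A : ent p (fun ω => (V ω, X₁ ω, X₂ ω)) = ent q (fun w : Fin 2 × 𝒱 × Bool × Bool => w.2) :=
    ent_comp p T (fun w => w.2)
  have e_Y : ent p (fun ω => if S ω = 0 then X₁ ω else X₂ ω)
      = ent q (fun w : Fin 2 × 𝒱 × Bool × Bool => if w.1 = 0 then w.2.2.1 else w.2.2.2) :=
    ent_comp p T (fun w => if w.1 = 0 then w.2.2.1 else w.2.2.2)
  have e_S : ent p S = ent q (fun w : Fin 2 × 𝒱 × Bool × Bool => w.1) :=
    ent_comp p T (fun w => w.1)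
  have e_AY : ent p (fun ω => ((V ω, X₁ ω, X₂ ω), if S ω = 0 then X₁ ω else X₂ ω))
      = ent q (fun w : Fin 2 × 𝒱 × Bool × Bool => (w.2, if w.1 = 0 then w.2.2.1 else w.2.2.2)) :=
    ent_comp p T (fun w => (w.2, if w.1 = 0 then w.2.2.1 else w.2.2.2))
  have e_AS : ent p (fun ω => ((V ω, X₁ ω, X₂ ω), S ω))
      = ent q (fun w : Fin 2 × 𝒱 × Bool × Bool => (w.2, w.1)) :=
    ent_comp p T (fun w => (w.2, w.1))
  have tmi : mi p (fun ω => (V ω, X₁ ω, X₂ ω)) (fun ω => if S ω = 0 then X₁ ω else X₂ ω)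
      - mi p (fun ω => (V ω, X₁ ω, X₂ ω)) S
      = mi q (fun w => w.2)
          (fun w : Fin 2 × 𝒱 × Bool × Bool => if w.1 = 0 then w.2.2.1 else w.2.2.2)
        - mi q (fun w => w.2) (fun w : Fin 2 × 𝒱 × Bool × Bool => w.1) := by
    simp only [mi]
    rw [e_A, e_Y, e_S, e_AY, e_AS]
  -- cmi transfer
  have f1 : ent p (fun ω => (X₁ ω, (V ω, X₂ ω)))
      = ent q (fun w : Fin 2 × 𝒱 × Bool × Bool => (w.2.2.1, (w.2.1, w.2.2.2))) :=
    ent_comp p T (fun w => (w.2.2.1, (w.2.1, w.2.2.2)))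
  have f2 : ent p (fun ω => ((if S ω = 0 then X₁ ω else X₂ ω : Bool), (V ω, X₂ ω)))
      = ent q (fun w : Fin 2 × 𝒱 × Bool × Bool =>
          ((if w.1 = 0 then w.2.2.1 else w.2.2.2 : Bool), (w.2.1, w.2.2.2))) :=
    ent_comp p T (fun w => ((if w.1 = 0 then w.2.2.1 else w.2.2.2 : Bool), (w.2.1, w.2.2.2)))
  have f3 : ent p (fun ω => (X₁ ω, ((if S ω = 0 then X₁ ω else X₂ ω : Bool), (V ω, X₂ ω))))
      = ent q (fun w : Fin 2 × 𝒱 × Bool × Bool =>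
          (w.2.2.1, ((if w.1 = 0 then w.2.2.1 else w.2.2.2 : Bool), (w.2.1, w.2.2.2)))) :=
    ent_comp p T (fun w =>
      (w.2.2.1, ((if w.1 = 0 then w.2.2.1 else w.2.2.2 : Bool), (w.2.1, w.2.2.2))))
  have f4 : ent p (fun ω => (V ω, X₂ ω))
      = ent q (fun w : Fin 2 × 𝒱 × Bool × Bool => (w.2.1, w.2.2.2)) :=
    ent_comp p T (fun w => (w.2.1, w.2.2.2))
  have tcmi : cmi p X₁ (fun ω => if S ω = 0 then X₁ ω else X₂ ω) (fun ω => (V ω, X₂ ω))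
      = cmi q (fun w : Fin 2 × 𝒱 × Bool × Bool => w.2.2.1)
          (fun w : Fin 2 × 𝒱 × Bool × Bool => if w.1 = 0 then w.2.2.1 else w.2.2.2)
          (fun w : Fin 2 × 𝒱 × Bool × Bool => (w.2.1, w.2.2.2)) := by
    simp only [cmi]
    rw [f1, f2, f3, f4]
  have main : 1 ≤ mi p (fun ω => (V ω, X₁ ω, X₂ ω)) (fun ω => if S ω = 0 then X₁ ω else X₂ ω)
      - mi p (fun ω => (V ω, X₁ ω, X₂ ω)) S →
      cmi p X₁ (fun ω => if S ω = 0 then X₁ ω else X₂ ω) (fun ω => (V ω, X₂ ω)) = 0 := by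
    intro hmi1
    rw [tmi] at hmi1
    have hvan := core_vanish q hq0 hq1 hS hmi1
    rw [tcmi]
    exact core_cmi q hvan
  exact ⟨main, fun ⟨_, hh2, hh3⟩ => by have := main hh3; linarith⟩
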